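/- Let Φ : (0,1) → (0,∞) be a function such that φ(x) := x^{−Φ(x)} is nonincreasing and left-continuous on (0,1), and suppose limsup_{x→0+} Φ(x) = 0. Then ℙ({ x ∈ Δ^{Words} : limsup_{m→∞} (log₂ H_{m,Φ}(x))/m < ∞ }) = 0; that is, for ℙ-almost every x, limsup_{m→∞} (log₂ H_{m,Φ}(x))/m = ∞. -/

import Mathlib

open MeasureTheory Filter Set
open scoped ENNReal NNReal

/-- The alphabet `Λ = {0,1}^d`, identified with `{0,…,2^d−1}`. -/
abbrev Lam (d : ℕ) := Fin d → Bool

/-- Finite words over the alphabet `Λ` (including the empty word). -/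
abbrev Wd (d : ℕ) := List (Lam d)

/-- The ambient space `ℝ^{2^d}` (with the Euclidean metric), coordinates indexed by `Λ`. -/
abbrev Pt (d : ℕ) := EuclideanSpace ℝ (Lam d)

/-- The simplex `Δ = {x : x_a ≥ 0, Σ_a x_a = 1}` in `ℝ^{2^d}`. -/
def simplexSet (d : ℕ) : Set (Pt d) := {p | (∀ a, 0 ≤ p a) ∧ (∑ a, p a) = 1}

/-- The uniform probability distribution `σ` on the simplex: the normalized restriction to
`Δ` of the `(2^d − 1)`-dimensional Hausdorff measure on `ℝ^{2^d}`. -/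
noncomputable def sigmaMeas (d : ℕ) : Measure (Pt d) :=
  ((Measure.hausdorffMeasure ((2 ^ d : ℝ) - 1) : Measure (Pt d)) (simplexSet d))⁻¹ •
    ((Measure.hausdorffMeasure ((2 ^ d : ℝ) - 1) : Measure (Pt d)).restrict (simplexSet d))

/-- Auxiliary recursion for labels: `labelFrom d x pre w` is the product, over the letters of
`w`, of the coordinates of `x` along the path starting at the node `pre`. -/
noncomputable def labelFrom (d : ℕ) (x : Wd d → Pt d) : Wd d → Wd d → ℝ
  | _, [] => 1
  | pre, a :: w => x pre a * labelFrom d x (pre ++ [a]) w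

/-- The label `L(x,w) = Π_{j=1}^{k} x(w_1⋯w_{j−1})_{w_j}` of the word `w` (empty word ↦ 1). -/
noncomputable def label (d : ℕ) (x : Wd d → Pt d) (w : Wd d) : ℝ := labelFrom d x [] w

/-- A word `w = w_1⋯w_m` is central if for each coordinate `i` the digit string
`(w_1(i),…,w_m(i))` equals `(0,1,1,…,1)` or `(1,0,0,…,0)`. -/
def IsCentral (d : ℕ) (w : Wd d) : Prop :=
  ∀ i : Fin d, ∃ b : Bool, w.map (fun a => a i) = b :: List.replicate (w.length - 1) (!b)

/-- The ratio `L(x,ω)/L(x,ωw)`, with the convention that a zero denominator gives `∞`. -/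
noncomputable def ratio (d : ℕ) (x : Wd d → Pt d) (ω w : Wd d) : ℝ≥0∞ :=
  if label d x (ω ++ w) = 0 then ⊤ else ENNReal.ofReal (label d x ω / label d x (ω ++ w))

/-- `H_{m,Φ}(x)`: sup over words `ω` (of length ≥ 1) with `φ(2^{−|ω|}) < 2^m`, where
`φ(x) = x^{−Φ(x)}`, of the min over central words `w` of length `m` of `L(x,ω)/L(x,ωw)`;
the sup over the empty collection is 1. -/
noncomputable def HmPhi (d : ℕ) (x : Wd d → Pt d) (Φ : ℝ → ℝ) (m : ℕ) : ℝ≥0∞ :=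
  1 ⊔ ⨆ (ω : Wd d) (_ : 1 ≤ ω.length ∧
      ((2 : ℝ) ^ (-(ω.length : ℝ))) ^ (-Φ ((2 : ℝ) ^ (-(ω.length : ℝ)))) < (2 : ℝ) ^ m),
    ⨅ (w : Wd d) (_ : w.length = m ∧ IsCentral d w), ratio d x ω w

/-- Base-2 logarithm on `ℝ≥0∞` (with `log₂ ∞ = ∞`). -/
noncomputable def log2 (y : ℝ≥0∞) : ℝ≥0∞ :=
  if y = ⊤ then ⊤ else ENNReal.ofReal (Real.logb 2 y.toReal)


namespace S16
variable {d : ℕ}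

/-- `k = 2^d - 1`. -/
def kk (d : ℕ) : ℕ := 2 ^ d - 1

lemma card_lam (d : ℕ) : Fintype.card (Lam d) = 2 ^ d := by
  simp [Lam]

lemma kk_cast (d : ℕ) : ((kk d : ℕ) : ℝ) = (2 ^ d : ℝ) - 1 := by
  have : (1:ℕ) ≤ 2 ^ d := Nat.one_le_two_pow
  push_cast [kk, this]
  ring

lemma kk_pos (hd : 1 ≤ d) : 0 < kk d := by
  have : (2:ℕ) ^ 1 ≤ 2 ^ d := Nat.pow_le_pow_right (by norm_num) hd
  simp only [kk]; omega

lemma card_ne (d : ℕ) (b : Lam d) : Fintype.card {a : Lam d // a ≠ b} = kk d := by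
  simp [Fintype.card_subtype_compl, card_lam, kk]

/-- an equivalence enumerating `Λ \ {b}`. -/
noncomputable def eb (d : ℕ) (b : Lam d) : Fin (kk d) ≃ {a : Lam d // a ≠ b} :=
  (Fintype.equivFinOfCardEq (card_ne d b)).symm

lemma sum_eb (b : Lam d) (p : Lam d → ℝ) :
    (∑ i, p (eb d b i)) + p b = ∑ a, p a := by
  rw [Equiv.sum_comp (eb d b) (fun a : {a : Lam d // a ≠ b} => p a)]
  rw [Fintype.sum_eq_add_sum_compl b p, add_comm]
  congr 1
  exact (Finset.sum_subtype _ (fun a => by simp) (fun a => p a)).symm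


noncomputable def mH (d : ℕ) : Measure (Pt d) :=
  Measure.hausdorffMeasure ((2 ^ d : ℝ) - 1)

noncomputable def gmap (d : ℕ) (b : Lam d) : Pt d → (Fin (kk d) → ℝ) :=
  fun p i => p (eb d b i)

noncomputable def fmap (d : ℕ) (b : Lam d) : (Fin (kk d) → ℝ) → Pt d :=
  fun y => WithLp.toLp 2 (fun a => if h : a = b then 1 - ∑ i, y i else y ((eb d b).symm ⟨a, h⟩))

lemma fmap_apply_eb (b : Lam d) (y : Fin (kk d) → ℝ) (i : Fin (kk d)) :
    fmap d b y (eb d b i) = y i := by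
  have h : (eb d b i : Lam d) ≠ b := (eb d b i).2
  simp only [fmap, PiLp.toLp_apply, dif_neg h]
  congr 1
  rw [Subtype.coe_eta, Equiv.symm_apply_apply]

lemma fmap_apply_self (b : Lam d) (y : Fin (kk d) → ℝ) :
    fmap d b y b = 1 - ∑ i, y i := by
  simp only [fmap, PiLp.toLp_apply]; rw [dif_pos trivial]

lemma sum_fmap (b : Lam d) (y : Fin (kk d) → ℝ) :
    ∑ a, fmap d b y a = 1 := by
  rw [← sum_eb b (fmap d b y)]
  have h1 : ∑ i, fmap d b y (eb d b i) = ∑ i, y i :=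
    Finset.sum_congr rfl fun i _ => fmap_apply_eb b y i
  rw [h1, fmap_apply_self]; ring

lemma fmap_gmap (b : Lam d) (p : Pt d) (hp : ∑ a, p a = 1) :
    fmap d b (gmap d b p) = p := by
  ext a
  by_cases h : a = b
  · rw [h, fmap_apply_self]
    have h2 : ∑ i, gmap d b p i = ∑ i, p (eb d b i) := rfl
    have := sum_eb b p
    rw [h2]; linarith
  · simp only [fmap, gmap, PiLp.toLp_apply]
    rw [dif_neg h]
    rw [Equiv.apply_symm_apply]

lemma lipschitz_gmap (b : Lam d) : LipschitzWith 1 (gmap d b) := by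
  apply LipschitzWith.of_dist_le_mul
  intro p q
  rw [NNReal.coe_one, one_mul]
  rw [dist_pi_le_iff dist_nonneg]
  intro i
  have h1 : dist (p (eb d b i)) (q (eb d b i)) ^ 2 ≤ ∑ a, dist (p a) (q a) ^ 2 :=
    Finset.single_le_sum (f := fun a => dist (p a) (q a) ^ 2)
      (fun a _ => sq_nonneg _) (Finset.mem_univ _)
  calc dist (p (eb d b i)) (q (eb d b i))
      = Real.sqrt (dist (p (eb d b i)) (q (eb d b i)) ^ 2) :=
        (Real.sqrt_sq dist_nonneg).symm
    _ ≤ Real.sqrt (∑ a, dist (p a) (q a) ^ 2) := Real.sqrt_le_sqrt h1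
    _ = dist p q := (EuclideanSpace.dist_eq p q).symm

lemma lipschitz_fmap (hd : 1 ≤ d) (b : Lam d) :
    LipschitzWith (Real.toNNReal (Real.sqrt (2 ^ d) * kk d)) (fmap d b) := by
  apply LipschitzWith.of_dist_le_mul
  intro y y'
  have hk1 : (1 : ℝ) ≤ kk d := by exact_mod_cast kk_pos hd
  have hs : 0 ≤ dist y y' := dist_nonneg
  have hcoord : ∀ a, dist (fmap d b y a) (fmap d b y' a) ≤ (kk d : ℝ) * dist y y' := by
    intro a
    by_cases h : a = b
    · subst h
      rw [fmap_apply_self, fmap_apply_self, Real.dist_eq]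
      have heq : (1 - ∑ i, y i) - (1 - ∑ i, y' i) = ∑ i, (y' i - y i) := by
        rw [Finset.sum_sub_distrib]; ring
      rw [heq]
      calc |∑ i, (y' i - y i)| ≤ ∑ i, |y' i - y i| := Finset.abs_sum_le_sum_abs _ _
        _ ≤ ∑ _i : Fin (kk d), dist y y' := by
            apply Finset.sum_le_sum
            intro i _
            rw [← Real.dist_eq, dist_comm]
            exact dist_le_pi_dist y y' i
        _ = (kk d : ℝ) * dist y y' := by
            rw [Finset.sum_const, Finset.card_univ, Fintype.card_fin, nsmul_eq_mul]
    · simp only [fmap, PiLp.toLp_apply, dif_neg h]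
      calc dist (y ((eb d b).symm ⟨a, h⟩)) (y' ((eb d b).symm ⟨a, h⟩))
          ≤ dist y y' := dist_le_pi_dist y y' _
        _ ≤ (kk d : ℝ) * dist y y' := le_mul_of_one_le_left hs hk1
  have hsum : ∑ a, dist (fmap d b y a) (fmap d b y' a) ^ 2
      ≤ (2 ^ d : ℝ) * ((kk d : ℝ) * dist y y') ^ 2 := by
    calc ∑ a, dist (fmap d b y a) (fmap d b y' a) ^ 2
        ≤ ∑ _a : Lam d, ((kk d : ℝ) * dist y y') ^ 2 := by
          apply Finset.sum_le_sum
          intro a _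
          exact pow_le_pow_left₀ dist_nonneg (hcoord a) 2
      _ = (2 ^ d : ℝ) * ((kk d : ℝ) * dist y y') ^ 2 := by
          rw [Finset.sum_const, Finset.card_univ, card_lam, nsmul_eq_mul]
          push_cast; ring
  calc dist (fmap d b y) (fmap d b y')
      = Real.sqrt (∑ a, dist (fmap d b y a) (fmap d b y' a) ^ 2) :=
        EuclideanSpace.dist_eq _ _
    _ ≤ Real.sqrt ((2 ^ d : ℝ) * ((kk d : ℝ) * dist y y') ^ 2) := Real.sqrt_le_sqrt hsum
    _ = Real.sqrt (2 ^ d) * ((kk d : ℝ) * dist y y') := by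
        rw [Real.sqrt_mul (by positivity), Real.sqrt_sq (by positivity)]
    _ = (Real.toNNReal (Real.sqrt (2 ^ d) * kk d) : ℝ) * dist y y' := by
        rw [Real.coe_toNNReal _ (by positivity)]
        ring


lemma hausdorff_pi_eq :
    (Measure.hausdorffMeasure ((2 ^ d : ℝ) - 1) : Measure (Fin (kk d) → ℝ)) = volume := by
  rw [← kk_cast d]
  have : (kk d : ℝ) = ((Fintype.card (Fin (kk d)) : ℕ) : ℝ) := by simp
  rw [this]
  exact MeasureTheory.hausdorffMeasure_pi_real

lemma exp_nonneg (hd : 1 ≤ d) : (0:ℝ) ≤ (2 ^ d : ℝ) - 1 := by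
  have : (1:ℝ) ≤ 2 ^ d := one_le_pow₀ (by norm_num)
  linarith

lemma simplex_subset_image (b : Lam d) :
    simplexSet d ⊆ fmap d b '' (Set.univ.pi fun _ : Fin (kk d) => Set.Icc (0:ℝ) 1) := by
  intro p hp
  refine ⟨gmap d b p, ?_, fmap_gmap b p hp.2⟩
  intro i _
  refine ⟨hp.1 _, ?_⟩
  calc p (eb d b i) ≤ ∑ a, p a :=
        Finset.single_le_sum (fun a _ => hp.1 a) (Finset.mem_univ _)
    _ = 1 := hp.2

lemma mH_simplex_lt_top (hd : 1 ≤ d) : mH d (simplexSet d) < ⊤ := by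
  classical
  obtain ⟨b⟩ : Nonempty (Lam d) := ⟨fun _ => false⟩
  have h1 : mH d (simplexSet d)
      ≤ mH d (fmap d b '' (Set.univ.pi fun _ : Fin (kk d) => Set.Icc (0:ℝ) 1)) :=
    measure_mono (simplex_subset_image b)
  have h2 := (lipschitz_fmap hd b).hausdorffMeasure_image_le (exp_nonneg hd)
      (Set.univ.pi fun _ : Fin (kk d) => Set.Icc (0:ℝ) 1)
  have h3 : (Measure.hausdorffMeasure ((2 ^ d : ℝ) - 1) : Measure (Fin (kk d) → ℝ))
      (Set.univ.pi fun _ : Fin (kk d) => Set.Icc (0:ℝ) 1)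
      = ∏ _i : Fin (kk d), (volume (Set.Icc (0:ℝ) 1)) := by
    rw [hausdorff_pi_eq, volume_pi_pi]
  have h4 : mH d (simplexSet d)
      ≤ ((Real.toNNReal (Real.sqrt (2 ^ d) * kk d) : ℝ≥0∞) ^ ((2 ^ d : ℝ) - 1)) *
        ((Measure.hausdorffMeasure ((2 ^ d : ℝ) - 1) : Measure (Fin (kk d) → ℝ))
          (Set.univ.pi fun _ : Fin (kk d) => Set.Icc (0:ℝ) 1)) := h1.trans h2
  rw [h3] at h4
  refine lt_of_le_of_lt h4 (ENNReal.mul_lt_top ?_ ?_)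
  · exact ENNReal.rpow_lt_top_of_nonneg (exp_nonneg hd) ENNReal.coe_ne_top
  · simp only [Real.volume_Icc]
    exact ENNReal.prod_lt_top (fun i _ => ENNReal.ofReal_lt_top)

lemma box2_subset (hd : 1 ≤ d) (b : Lam d) {δ : ℝ} (hδ0 : 0 < δ) (hδ1 : δ ≤ 1) :
    (Set.univ.pi fun _ : Fin (kk d) => Set.Icc ((1-δ)/(kk d)) (1/(kk d)))
      ⊆ gmap d b '' (simplexSet d ∩ {p : Pt d | p b ≤ δ}) := by
  intro y hy
  have hk : (0:ℝ) < kk d := by exact_mod_cast kk_pos hd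
  have hmem : ∀ i, y i ∈ Set.Icc ((1-δ)/(kk d)) (1/(kk d)) := fun i => hy i (Set.mem_univ i)
  have hsum_le : ∑ i, y i ≤ 1 := by
    calc ∑ i, y i ≤ ∑ _i : Fin (kk d), (1/(kk d) : ℝ) :=
          Finset.sum_le_sum fun i _ => (hmem i).2
      _ = 1 := by
          rw [Finset.sum_const, Finset.card_univ, Fintype.card_fin, nsmul_eq_mul]
          field_simp
  have hsum_ge : 1 - δ ≤ ∑ i, y i := by
    calc (1 - δ : ℝ) = ∑ _i : Fin (kk d), ((1-δ)/(kk d) : ℝ) := by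
          rw [Finset.sum_const, Finset.card_univ, Fintype.card_fin, nsmul_eq_mul]
          field_simp
      _ ≤ ∑ i, y i := Finset.sum_le_sum fun i _ => (hmem i).1
  refine ⟨fmap d b y, ⟨⟨?_, sum_fmap b y⟩, ?_⟩, ?_⟩
  · intro a
    by_cases h : a = b
    · rw [h, fmap_apply_self]; linarith
    · simp only [fmap, PiLp.toLp_apply]
      rw [dif_neg h]
      have := (hmem ((eb d b).symm ⟨a, h⟩)).1
      have h0 : (0:ℝ) ≤ (1-δ)/(kk d) := div_nonneg (by linarith) hk.le
      linarith
  · show fmap d b y b ≤ δ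
    rw [fmap_apply_self]; linarith
  · funext i
    exact fmap_apply_eb b y i

lemma mH_inter_lower (hd : 1 ≤ d) (b : Lam d) {δ : ℝ} (hδ0 : 0 < δ) (hδ1 : δ ≤ 1) :
    ENNReal.ofReal ((δ/(kk d))^(kk d)) ≤ mH d (simplexSet d ∩ {p : Pt d | p b ≤ δ}) := by
  have hk : (0:ℝ) < kk d := by exact_mod_cast kk_pos hd
  have hvol : (Measure.hausdorffMeasure ((2 ^ d : ℝ) - 1) : Measure (Fin (kk d) → ℝ))
      (Set.univ.pi fun _ : Fin (kk d) => Set.Icc ((1-δ)/(kk d)) (1/(kk d)))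
      = ENNReal.ofReal ((δ/(kk d))^(kk d)) := by
    rw [hausdorff_pi_eq, volume_pi_pi]
    simp only [Real.volume_Icc]
    have h1 : (1/(kk d) : ℝ) - (1-δ)/(kk d) = δ/(kk d) := by field_simp; ring
    rw [h1, Finset.prod_const, Finset.card_univ, Fintype.card_fin,
      ← ENNReal.ofReal_pow (by positivity)]
  have himg := (lipschitz_gmap b).hausdorffMeasure_image_le (exp_nonneg hd)
      (simplexSet d ∩ {p : Pt d | p b ≤ δ})
  have hmono : (Measure.hausdorffMeasure ((2 ^ d : ℝ) - 1) : Measure (Fin (kk d) → ℝ))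
      (Set.univ.pi fun _ : Fin (kk d) => Set.Icc ((1-δ)/(kk d)) (1/(kk d)))
      ≤ (Measure.hausdorffMeasure ((2 ^ d : ℝ) - 1) : Measure (Fin (kk d) → ℝ))
        (gmap d b '' (simplexSet d ∩ {p : Pt d | p b ≤ δ})) :=
    measure_mono (box2_subset hd b hδ0 hδ1)
  rw [hvol] at hmono
  refine hmono.trans (himg.trans ?_)
  rw [ENNReal.coe_one, ENNReal.one_rpow, one_mul]
  exact le_rfl

lemma simplex_coord_le_one {p : Pt d} (hp : p ∈ simplexSet d) (b : Lam d) : p b ≤ 1 := by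
  calc p b ≤ ∑ a, p a := Finset.single_le_sum (fun a _ => hp.1 a) (Finset.mem_univ _)
    _ = 1 := hp.2

lemma mH_simplex_pos (hd : 1 ≤ d) : 0 < mH d (simplexSet d) := by
  obtain ⟨b⟩ : Nonempty (Lam d) := ⟨fun _ => false⟩
  have h := mH_inter_lower hd b one_pos le_rfl
  have heq : simplexSet d ∩ {p : Pt d | p b ≤ 1} = simplexSet d :=
    Set.inter_eq_self_of_subset_left (fun p hp => simplex_coord_le_one hp b)
  rw [heq] at h
  refine lt_of_lt_of_le ?_ h
  have hk : (0:ℝ) < kk d := by exact_mod_cast kk_pos hd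
  apply ENNReal.ofReal_pos.2
  positivity


lemma measurableSet_simplex : MeasurableSet (simplexSet d) := by
  have h1 : IsClosed (simplexSet d) := by
    have : simplexSet d = (⋂ a, {p : Pt d | 0 ≤ p a}) ∩ {p : Pt d | ∑ a, p a = 1} := by
      ext p; simp [simplexSet, Set.mem_iInter]
    rw [this]
    exact IsClosed.inter (isClosed_iInter fun a =>
        isClosed_le continuous_const (by fun_prop))
      (isClosed_eq (continuous_finset_sum _ fun a _ => by fun_prop) continuous_const)
  exact h1.measurableSet

lemma measurableSet_coordLe (b : Lam d) (δ : ℝ) :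
    MeasurableSet {p : Pt d | p b ≤ δ} :=
  (isClosed_le (by fun_prop) continuous_const).measurableSet

lemma sigmaMeas_eq (s : Set (Pt d)) (hs : MeasurableSet s) :
    sigmaMeas d s = (mH d (simplexSet d))⁻¹ * mH d (simplexSet d ∩ s) := by
  rw [sigmaMeas, Measure.smul_apply, smul_eq_mul]
  rw [Measure.restrict_apply hs, Set.inter_comm]
  rfl

lemma sigmaMeas_univ (hd : 1 ≤ d) : sigmaMeas d Set.univ = 1 := by
  rw [sigmaMeas_eq _ MeasurableSet.univ, Set.inter_univ]
  exact ENNReal.inv_mul_cancel (mH_simplex_pos hd).ne' (mH_simplex_lt_top hd).ne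

lemma sigmaMeas_prob (hd : 1 ≤ d) : IsProbabilityMeasure (sigmaMeas d) :=
  ⟨sigmaMeas_univ hd⟩

lemma sigmaMeas_simplex (hd : 1 ≤ d) : sigmaMeas d (simplexSet d) = 1 := by
  rw [sigmaMeas_eq _ measurableSet_simplex, Set.inter_self]
  exact ENNReal.inv_mul_cancel (mH_simplex_pos hd).ne' (mH_simplex_lt_top hd).ne

lemma sigmaMeas_coordLe_ge (hd : 1 ≤ d) (b : Lam d) {δ : ℝ} (hδ0 : 0 < δ) (hδ1 : δ ≤ 1) :
    (mH d (simplexSet d))⁻¹ * ENNReal.ofReal ((δ/(kk d))^(kk d))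
      ≤ sigmaMeas d {p : Pt d | p b ≤ δ} := by
  rw [sigmaMeas_eq _ (measurableSet_coordLe b δ)]
  exact mul_le_mul_right (mH_inter_lower hd b hδ0 hδ1) _

lemma second_moment {Ω : Type*} [MeasurableSpace Ω] (μ : Measure Ω) [IsProbabilityMeasure μ]
    {ι : Type*} [Fintype ι] (B : ι → Set Ω) (hB : ∀ i, MeasurableSet (B i)) (ρ : ℝ≥0∞)
    (h1 : ∀ i, μ (B i) = ρ) (h2 : ∀ i j, i ≠ j → μ (B i ∩ B j) = ρ * ρ) :
    μ (⋃ i, B i)ᶜ ≤ ((Fintype.card ι : ℝ≥0∞) * ρ)⁻¹ := by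
  classical
  set N : ℝ≥0∞ := (Fintype.card ι : ℝ≥0∞) with hN
  by_cases hz : N * ρ = 0
  · rw [hz, ENNReal.inv_zero]; exact le_top
  have hN0 : N ≠ 0 := fun h => hz (by rw [h, zero_mul])
  have hρ0 : ρ ≠ 0 := fun h => hz (by rw [h, mul_zero])
  have hcard : Fintype.card ι ≠ 0 := fun h => hN0 (by simp [hN, h])
  have hι : Nonempty ι := Fintype.card_pos_iff.mp (Nat.pos_of_ne_zero hcard)
  obtain ⟨i0⟩ := hι
  have hρ1 : ρ ≤ 1 := (h1 i0) ▸ prob_le_one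
  have hNtop : N ≠ ⊤ := ENNReal.natCast_ne_top _
  set a : ℝ≥0∞ := N * ρ with ha
  have ha_top : a ≠ ⊤ := ENNReal.mul_ne_top hNtop (lt_of_le_of_lt hρ1 ENNReal.one_lt_top).ne
  set U : Set Ω := ⋃ i, B i with hU
  have hUmeas : MeasurableSet U := MeasurableSet.iUnion hB
  set Z : Ω → ℝ≥0∞ := fun ω => ∑ i, (B i).indicator 1 ω with hZ
  have hZmeas : Measurable Z :=
    Finset.measurable_sum _ fun i _ => measurable_one.indicator (hB i)
  have hEZ : ∫⁻ ω, Z ω ∂μ = a := by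
    rw [hZ]
    rw [lintegral_finset_sum _ fun i _ => measurable_one.indicator (hB i)]
    simp only [lintegral_indicator_one (hB _), h1]
    rw [Finset.sum_const, Finset.card_univ, nsmul_eq_mul, ha, hN]
  have hZsq : ∀ ω, Z ω * Z ω = ∑ i, ∑ j, (B i ∩ B j).indicator (1 : Ω → ℝ≥0∞) ω := by
    intro ω
    rw [hZ, Finset.sum_mul_sum]
    congr 1; funext i; congr 1; funext j
    rw [Set.inter_indicator_one]; rfl
  have hEZ2 : ∫⁻ ω, Z ω * Z ω ∂μ ≤ a + a * a := by
    have hmeas2 : ∀ i : ι, Measurable fun ω => ∑ j, (B i ∩ B j).indicator (1:Ω → ℝ≥0∞) ω :=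
      fun i => Finset.measurable_sum _ fun j _ => measurable_one.indicator ((hB i).inter (hB j))
    calc ∫⁻ ω, Z ω * Z ω ∂μ
        = ∑ i, ∫⁻ ω, ∑ j, (B i ∩ B j).indicator (1:Ω → ℝ≥0∞) ω ∂μ := by
          rw [← lintegral_finset_sum _ fun i _ => hmeas2 i]
          exact lintegral_congr fun ω => hZsq ω
      _ = ∑ i : ι, ∑ j : ι, μ (B i ∩ B j) := by
          refine Finset.sum_congr rfl fun i _ => ?_
          rw [lintegral_finset_sum _ fun j _ => measurable_one.indicator ((hB i).inter (hB j))]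
          exact Finset.sum_congr rfl fun j _ => lintegral_indicator_one ((hB i).inter (hB j))
      _ ≤ ∑ _i : ι, (ρ + N * (ρ * ρ)) := by
          refine Finset.sum_le_sum fun i _ => ?_
          rw [Fintype.sum_eq_add_sum_compl i]
          refine add_le_add ?_ ?_
          · rw [Set.inter_self, h1 i]
          · calc ∑ j ∈ {i}ᶜ, μ (B i ∩ B j) = ∑ j ∈ ({i}ᶜ : Finset ι), ρ * ρ := by
                  refine Finset.sum_congr rfl fun j hj => ?_
                  exact h2 i j (fun h => by simp [h] at hj)
              _ = (({i}ᶜ : Finset ι).card : ℝ≥0∞) * (ρ * ρ) := by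
                  rw [Finset.sum_const, nsmul_eq_mul]
              _ ≤ N * (ρ * ρ) := by
                  refine mul_le_mul_left ?_ _
                  rw [hN]
                  exact_mod_cast Nat.cast_le.mpr (Finset.card_le_univ _)
      _ = a + a * a := by
          rw [Finset.sum_const, Finset.card_univ, nsmul_eq_mul, ha, ← hN]
          ring
  -- Cauchy–Schwarz
  have hind : ∀ ω, Z ω = Z ω * U.indicator 1 ω := by
    intro ω
    by_cases h : ω ∈ U
    · rw [Set.indicator_of_mem h, Pi.one_apply, mul_one]
    · have : Z ω = 0 := by
        rw [hZ]
        refine Finset.sum_eq_zero fun i _ => ?_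
        exact Set.indicator_of_notMem (fun hi => h (Set.mem_iUnion.mpr ⟨i, hi⟩)) _
      rw [this, Set.indicator_of_notMem h, mul_zero]
  have hCS : a ≤ (∫⁻ ω, Z ω ^ (2:ℝ) ∂μ) ^ (1/(2:ℝ)) * (∫⁻ ω, U.indicator (1:Ω→ℝ≥0∞) ω ^ (2:ℝ) ∂μ) ^ (1/(2:ℝ)) := by
    rw [← hEZ]
    have hconj : Real.HolderConjugate 2 2 := Real.HolderConjugate.two_two
    have hmg : AEMeasurable (U.indicator (1:Ω→ℝ≥0∞)) μ := (measurable_one.indicator hUmeas).aemeasurable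
    have := ENNReal.lintegral_mul_le_Lp_mul_Lq μ hconj hZmeas.aemeasurable hmg
    calc ∫⁻ ω, Z ω ∂μ = ∫⁻ ω, ((Z * U.indicator (1:Ω→ℝ≥0∞)) : Ω → ℝ≥0∞) ω ∂μ :=
          lintegral_congr fun ω => (hind ω).trans (Pi.mul_apply Z (U.indicator 1) ω).symm
      _ ≤ _ := this
  have hindsq : ∫⁻ ω, U.indicator (1:Ω→ℝ≥0∞) ω ^ (2:ℝ) ∂μ = μ U := by
    have : ∀ ω, U.indicator (1:Ω→ℝ≥0∞) ω ^ (2:ℝ) = U.indicator 1 ω := by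
      intro ω
      by_cases h : ω ∈ U
      · rw [Set.indicator_of_mem h, Pi.one_apply, ENNReal.one_rpow]
      · rw [Set.indicator_of_notMem h, ENNReal.zero_rpow_of_pos (by norm_num)]
    rw [lintegral_congr this, lintegral_indicator_one hUmeas]
  have hZ2eq : ∫⁻ ω, Z ω ^ (2:ℝ) ∂μ = ∫⁻ ω, Z ω * Z ω ∂μ := by
    refine lintegral_congr fun ω => ?_
    rw [show (2:ℝ) = ((2:ℕ):ℝ) by norm_num, ENNReal.rpow_natCast, sq]
  have hsq : ∀ y : ℝ≥0∞, y ^ (1/(2:ℝ)) * y ^ (1/(2:ℝ)) = y := by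
    intro y
    rw [← ENNReal.rpow_add_of_nonneg _ _ (by norm_num) (by norm_num)]
    norm_num
  have key : a * a ≤ (a + a * a) * μ U := by
    rw [hindsq] at hCS
    have h5 := mul_le_mul' hCS hCS
    calc a * a ≤ ((∫⁻ ω, Z ω ^ (2:ℝ) ∂μ) ^ (1/(2:ℝ)) * μ U ^ (1/(2:ℝ))) *
          ((∫⁻ ω, Z ω ^ (2:ℝ) ∂μ) ^ (1/(2:ℝ)) * μ U ^ (1/(2:ℝ))) := h5
      _ = ((∫⁻ ω, Z ω ^ (2:ℝ) ∂μ) ^ (1/(2:ℝ)) * (∫⁻ ω, Z ω ^ (2:ℝ) ∂μ) ^ (1/(2:ℝ))) *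
          (μ U ^ (1/(2:ℝ)) * μ U ^ (1/(2:ℝ))) := by ring
      _ = (∫⁻ ω, Z ω ^ (2:ℝ) ∂μ) * μ U := by rw [hsq, hsq]
      _ ≤ (a + a * a) * μ U := by
        refine mul_le_mul_left ?_ _
        rw [hZ2eq]
        exact hEZ2
  have hone_a : (1:ℝ≥0∞) + a ≠ ⊤ := by
    rw [ENNReal.add_ne_top]; exact ⟨ENNReal.one_ne_top, ha_top⟩
  have ha0 : a ≠ 0 := hz
  have h6 : (1 + a)⁻¹ * a ≤ μ U := by
    have h5 : a ≤ (1 + a) * μ U := by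
      have : a * a ≤ a * ((1 + a) * μ U) := by
        refine key.trans (le_of_eq ?_); ring
      exact (ENNReal.mul_le_mul_iff_right ha0 ha_top).mp this
    calc (1 + a)⁻¹ * a ≤ (1 + a)⁻¹ * ((1 + a) * μ U) := mul_le_mul_right h5 _
      _ = μ U := by
        rw [← mul_assoc, ENNReal.inv_mul_cancel (one_pos.trans_le le_self_add).ne' hone_a, one_mul]
  calc μ Uᶜ = 1 - μ U := prob_compl_eq_one_sub hUmeas
    _ ≤ 1 - (1 + a)⁻¹ * a := tsub_le_tsub_left h6 1
    _ ≤ a⁻¹ := by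
      rw [tsub_le_iff_right]
      calc (1:ℝ≥0∞) = (1+a)⁻¹ * (1+a) := (ENNReal.inv_mul_cancel (one_pos.trans_le le_self_add).ne' hone_a).symm
        _ = (1+a)⁻¹ + (1+a)⁻¹ * a := by rw [mul_add, mul_one]
        _ ≤ a⁻¹ + (1+a)⁻¹ * a := add_le_add_left (ENNReal.inv_le_inv' le_add_self) _

def Cset (d : ℕ) (a : Lam d) (δ : ℝ) : Set (Pt d) := {p : Pt d | p a ≤ δ}

def negL {d : ℕ} (b : Lam d) : Lam d := fun i => !(b i)

def node (d ℓ : ℕ) (r : Fin ℓ → Lam d) (b : Lam d) : Wd d := List.ofFn r ++ [b]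

lemma node_inj (d ℓ : ℕ) : Function.Injective
    (fun p : (Fin ℓ → Lam d) × Lam d => node d ℓ p.1 p.2) := by
  rintro ⟨r, b⟩ ⟨r', b'⟩ h
  simp only [node] at h
  have hlen : (List.ofFn r).length = (List.ofFn r').length := by
    simp [List.length_ofFn]
  obtain ⟨h1, h2⟩ := List.append_inj h hlen
  have hr : r = r' := by
    apply List.ofFn_injective h1
  have hb : b = b' := by
    simpa using h2
  simp [hr, hb]

/-- The event: all depth-`(ℓ+1)` continuation coordinates below `ω = ofFn r` are small. -/
def Bev (d ℓ : ℕ) (δ : ℝ) (r : Fin ℓ → Lam d) : Set (Wd d → Pt d) :=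
  {x | ∀ b : Lam d, x (node d ℓ r b) ∈ Cset d (negL b) δ}

noncomputable def Fnodes (d ℓ : ℕ) : Finset (Wd d) :=
  Finset.image (fun p : (Fin ℓ → Lam d) × Lam d => node d ℓ p.1 p.2) Finset.univ

lemma node_mem_Fnodes (d ℓ : ℕ) (p : (Fin ℓ → Lam d) × Lam d) :
    node d ℓ p.1 p.2 ∈ Fnodes d ℓ :=
  Finset.mem_image.mpr ⟨p, Finset.mem_univ _, rfl⟩

noncomputable def eF (d ℓ : ℕ) : ((Fin ℓ → Lam d) × Lam d) ≃ (Fnodes d ℓ : Finset (Wd d)) :=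
  Equiv.ofBijective (fun p => ⟨node d ℓ p.1 p.2, node_mem_Fnodes d ℓ p⟩)
    ⟨fun p p' h => node_inj d ℓ (by simpa using congrArg Subtype.val h),
     fun w => by
      obtain ⟨p, _, hp⟩ := Finset.mem_image.mp w.2
      exact ⟨p, Subtype.ext hp⟩⟩

/-- decode a node into its (root, letter) pair -/
noncomputable def dec (d ℓ : ℕ) (w : (Fnodes d ℓ : Finset (Wd d))) :
    (Fin ℓ → Lam d) × Lam d := (eF d ℓ).symm w

lemma dec_eF (d ℓ : ℕ) (p : (Fin ℓ → Lam d) × Lam d) : dec d ℓ (eF d ℓ p) = p := by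
  rw [dec, Equiv.symm_apply_apply]

noncomputable def Dset (d ℓ : ℕ) (δ : ℝ) (r : Fin ℓ → Lam d)
    (w : (Fnodes d ℓ : Finset (Wd d))) : Set (Pt d) :=
  if (dec d ℓ w).1 = r then Cset d (negL (dec d ℓ w).2) δ else Set.univ

lemma measurableSet_Dset (d ℓ : ℕ) (δ : ℝ) (r : Fin ℓ → Lam d)
    (w : (Fnodes d ℓ : Finset (Wd d))) : MeasurableSet (Dset d ℓ δ r w) := by
  rw [Dset]; split_ifs
  · exact measurableSet_coordLe _ δ
  · exact MeasurableSet.univ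

noncomputable def Sev (d ℓ : ℕ) (δ : ℝ) (r : Fin ℓ → Lam d) :
    Set ((w : (Fnodes d ℓ : Finset (Wd d))) → Pt d) :=
  Set.univ.pi (Dset d ℓ δ r)

lemma eF_val (d ℓ : ℕ) (p : (Fin ℓ → Lam d) × Lam d) :
    ((eF d ℓ p : (Fnodes d ℓ : Finset (Wd d))) : Wd d) = node d ℓ p.1 p.2 := rfl

lemma Bev_preimage (d ℓ : ℕ) (δ : ℝ) (r : Fin ℓ → Lam d) :
    Bev d ℓ δ r =
      (fun x (w : (Fnodes d ℓ : Finset (Wd d))) => x (w : Wd d)) ⁻¹' Sev d ℓ δ r := by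
  ext x
  constructor
  · intro hx w _
    rw [Dset]
    split_ifs with h
    · have hw : (w : Wd d) = node d ℓ (dec d ℓ w).1 (dec d ℓ w).2 := by
        have := (eF d ℓ).apply_symm_apply w
        rw [← eF_val d ℓ (dec d ℓ w), dec, this]
      show x (w : Wd d) ∈ _
      rw [hw, h]
      exact hx (dec d ℓ w).2
    · exact Set.mem_univ _
  · intro hx b
    have hmem := hx (eF d ℓ (r, b)) (Set.mem_univ _)
    rw [Dset, dec_eF] at hmem
    simpa [eF_val] using hmem

noncomputable def QQ (d : ℕ) (δ : ℝ) : ℝ≥0∞ :=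
  ∏ b : Lam d, sigmaMeas d (Cset d (negL b) δ)

lemma pi_Sev (d : ℕ) (hd : 1 ≤ d) (ℓ : ℕ) (δ : ℝ) (r : Fin ℓ → Lam d) :
    (Measure.pi fun _ : (Fnodes d ℓ : Finset (Wd d)) => sigmaMeas d) (Sev d ℓ δ r)
      = QQ d δ := by
  haveI : IsProbabilityMeasure (sigmaMeas d) := sigmaMeas_prob hd
  rw [Sev, Measure.pi_pi]
  rw [← Equiv.prod_comp (eF d ℓ) (fun w => sigmaMeas d (Dset d ℓ δ r w))]
  have hval : ∀ p : (Fin ℓ → Lam d) × Lam d,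
      sigmaMeas d (Dset d ℓ δ r (eF d ℓ p))
        = if p.1 = r then sigmaMeas d (Cset d (negL p.2) δ) else 1 := by
    intro p
    rw [Dset, dec_eF]
    split_ifs with h
    · rfl
    · exact measure_univ
  rw [Finset.prod_congr rfl fun p _ => hval p]
  rw [Fintype.prod_prod_type]
  have : ∀ r' : Fin ℓ → Lam d,
      (∏ b : Lam d, if r' = r then sigmaMeas d (Cset d (negL b) δ) else 1)
        = if r' = r then QQ d δ else 1 := by
    intro r'
    split_ifs with h
    · rfl
    · exact Finset.prod_const_one
  rw [Finset.prod_congr rfl fun r' _ => this r']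
  rw [Finset.prod_ite_eq' Finset.univ r (fun _ => QQ d δ)]
  simp

lemma pi_Sev_inter (d : ℕ) (hd : 1 ≤ d) (ℓ : ℕ) (δ : ℝ) (r r' : Fin ℓ → Lam d)
    (hrr : r ≠ r') :
    (Measure.pi fun _ : (Fnodes d ℓ : Finset (Wd d)) => sigmaMeas d)
      (Sev d ℓ δ r ∩ Sev d ℓ δ r') = QQ d δ * QQ d δ := by
  haveI : IsProbabilityMeasure (sigmaMeas d) := sigmaMeas_prob hd
  rw [Sev, Sev, ← Set.pi_inter_distrib, Measure.pi_pi]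
  rw [← Equiv.prod_comp (eF d ℓ)
    (fun w => sigmaMeas d (Dset d ℓ δ r w ∩ Dset d ℓ δ r' w))]
  have hval : ∀ p : (Fin ℓ → Lam d) × Lam d,
      sigmaMeas d (Dset d ℓ δ r (eF d ℓ p) ∩ Dset d ℓ δ r' (eF d ℓ p))
        = (if p.1 = r then sigmaMeas d (Cset d (negL p.2) δ) else 1)
          * (if p.1 = r' then sigmaMeas d (Cset d (negL p.2) δ) else 1) := by
    intro p
    rw [Dset, Dset, dec_eF]
    by_cases h : p.1 = r
    · have h' : p.1 ≠ r' := fun hh => hrr (h ▸ hh ▸ rfl)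
      rw [if_pos h, if_neg h', if_pos h, if_neg h', Set.inter_univ, mul_one]
    · by_cases h' : p.1 = r'
      · rw [if_neg h, if_pos h', if_neg h, if_pos h', Set.univ_inter, one_mul]
      · rw [if_neg h, if_neg h', if_neg h, if_neg h', Set.univ_inter, one_mul]
        exact measure_univ
  rw [Finset.prod_congr rfl fun p _ => hval p, Finset.prod_mul_distrib]
  have hfac : ∀ t : Fin ℓ → Lam d,
      (∏ p : (Fin ℓ → Lam d) × Lam d,
        if p.1 = t then sigmaMeas d (Cset d (negL p.2) δ) else 1) = QQ d δ := by
    intro t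
    rw [Fintype.prod_prod_type]
    have hin : ∀ r'' : Fin ℓ → Lam d,
        (∏ b : Lam d, if r'' = t then sigmaMeas d (Cset d (negL b) δ) else 1)
          = if r'' = t then QQ d δ else 1 := by
      intro r''
      split_ifs with h
      · rfl
      · exact Finset.prod_const_one
    rw [Finset.prod_congr rfl fun r'' _ => hin r'']
    rw [Finset.prod_ite_eq' Finset.univ t (fun _ => QQ d δ)]
    simp
  rw [hfac r, hfac r']


lemma measurable_proj (d : ℕ) (F : Finset (Wd d)) :
    Measurable (fun (x : Wd d → Pt d) (w : F) => x (w : Wd d)) :=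
  measurable_pi_lambda _ fun w => measurable_pi_apply _

lemma measurableSet_Sev (d ℓ : ℕ) (δ : ℝ) (r : Fin ℓ → Lam d) :
    MeasurableSet (Sev d ℓ δ r) :=
  MeasurableSet.univ_pi fun w => measurableSet_Dset d ℓ δ r w

lemma P_Bev (d : ℕ) (hd : 1 ≤ d) (P : Measure (Wd d → Pt d))
    (hP : ∀ F : Finset (Wd d),
      P.map (fun x (w : F) => x (w : Wd d)) = Measure.pi fun _ : F => sigmaMeas d)
    (ℓ : ℕ) (δ : ℝ) (r : Fin ℓ → Lam d) : P (Bev d ℓ δ r) = QQ d δ := by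
  rw [Bev_preimage, ← Measure.map_apply (measurable_proj d (Fnodes d ℓ))
    (measurableSet_Sev d ℓ δ r), hP (Fnodes d ℓ), pi_Sev d hd ℓ δ r]

lemma P_Bev_inter (d : ℕ) (hd : 1 ≤ d) (P : Measure (Wd d → Pt d))
    (hP : ∀ F : Finset (Wd d),
      P.map (fun x (w : F) => x (w : Wd d)) = Measure.pi fun _ : F => sigmaMeas d)
    (ℓ : ℕ) (δ : ℝ) (r r' : Fin ℓ → Lam d) (hrr : r ≠ r') :
    P (Bev d ℓ δ r ∩ Bev d ℓ δ r') = QQ d δ * QQ d δ := by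
  rw [Bev_preimage, Bev_preimage, ← Set.preimage_inter,
    ← Measure.map_apply (measurable_proj d (Fnodes d ℓ))
      ((measurableSet_Sev d ℓ δ r).inter (measurableSet_Sev d ℓ δ r')),
    hP (Fnodes d ℓ), pi_Sev_inter d hd ℓ δ r r' hrr]

lemma measurableSet_Bev (d ℓ : ℕ) (δ : ℝ) (r : Fin ℓ → Lam d) :
    MeasurableSet (Bev d ℓ δ r) := by
  rw [Bev_preimage]
  exact measurable_proj d (Fnodes d ℓ) (measurableSet_Sev d ℓ δ r)

lemma prob_bad (d : ℕ) (hd : 1 ≤ d) (P : Measure (Wd d → Pt d)) [IsProbabilityMeasure P]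
    (hP : ∀ F : Finset (Wd d),
      P.map (fun x (w : F) => x (w : Wd d)) = Measure.pi fun _ : F => sigmaMeas d)
    (ℓ : ℕ) (δ : ℝ) :
    P ((⋃ r : Fin ℓ → Lam d, Bev d ℓ δ r)ᶜ)
      ≤ ((Fintype.card (Fin ℓ → Lam d) : ℝ≥0∞) * QQ d δ)⁻¹ :=
  second_moment P (Bev d ℓ δ) (measurableSet_Bev d ℓ δ) (QQ d δ)
    (P_Bev d hd P hP ℓ δ) (fun r r' h => P_Bev_inter d hd P hP ℓ δ r r' h)

lemma labelFrom_append (x : Wd d → Pt d) (u : Wd d) :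
    ∀ pre v, labelFrom d x pre (u ++ v) = labelFrom d x pre u * labelFrom d x (pre ++ u) v := by
  induction u with
  | nil => intro pre v; simp [labelFrom]
  | cons a t ih =>
    intro pre v
    simp only [List.cons_append, labelFrom, List.append_eq]
    rw [ih (pre ++ [a]) v, mul_assoc]
    congr 2
    simp

lemma label_append (x : Wd d → Pt d) (ω w : Wd d) :
    label d x (ω ++ w) = label d x ω * labelFrom d x ω w := by
  rw [label, labelFrom_append x ω [] w, label]
  simp

lemma labelFrom_nonneg {x : Wd d → Pt d} (hx : ∀ w, x w ∈ simplexSet d) :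
    ∀ w pre, 0 ≤ labelFrom d x pre w := by
  intro w
  induction w with
  | nil => intro pre; simp [labelFrom]
  | cons a t ih =>
    intro pre
    exact mul_nonneg ((hx pre).1 a) (ih (pre ++ [a]))

lemma labelFrom_le_one {x : Wd d → Pt d} (hx : ∀ w, x w ∈ simplexSet d) :
    ∀ w pre, labelFrom d x pre w ≤ 1 := by
  intro w
  induction w with
  | nil => intro pre; simp [labelFrom]
  | cons a t ih =>
    intro pre
    calc x pre a * labelFrom d x (pre ++ [a]) t
        ≤ 1 * 1 := mul_le_mul (simplex_coord_le_one (hx pre) a) (ih (pre ++ [a]))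
          (labelFrom_nonneg hx t (pre ++ [a])) one_pos.le
      _ = 1 := one_mul 1

lemma central_eq {m : ℕ} (hm : 1 ≤ m) {w : Wd d} (hlen : w.length = m)
    (hc : IsCentral d w) : ∃ b : Lam d, w = b :: List.replicate (m - 1) (negL b) := by
  cases w with
  | nil => simp at hlen; omega
  | cons a t =>
    refine ⟨a, ?_⟩
    have hlt : t.length = m - 1 := by
      simp at hlen; omega
    have ht : t = List.replicate (m - 1) (negL a) := by
      rw [List.eq_replicate_iff]
      refine ⟨hlt, fun c hc' => ?_⟩
      funext i
      obtain ⟨bi, hbi⟩ := hc i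
      simp only [List.map_cons, List.length_cons] at hbi
      have hhead : a i = bi := (List.cons.injEq _ _ _ _).mp hbi |>.1
      have htail : t.map (fun a => a i) = List.replicate ((a :: t).length - 1) (!bi) :=
        (List.cons.injEq _ _ _ _).mp hbi |>.2
      have hmem : c i ∈ t.map (fun a => a i) := List.mem_map_of_mem hc'
      rw [htail] at hmem
      have := List.eq_of_mem_replicate hmem
      rw [this, ← hhead]
      rfl
    rw [← ht]

lemma ratio_ge {x : Wd d → Pt d} (hx : ∀ w, x w ∈ simplexSet d) {ω : Wd d} {m : ℕ}
    (hm : 2 ≤ m) {b : Lam d} {δ : ℝ} (hδ0 : 0 < δ)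
    (hb : x (ω ++ [b]) (negL b) ≤ δ) :
    ENNReal.ofReal δ⁻¹ ≤ ratio d x ω (b :: List.replicate (m - 1) (negL b)) := by
  set w : Wd d := b :: List.replicate (m - 1) (negL b) with hw
  by_cases h0 : label d x (ω ++ w) = 0
  · rw [ratio, if_pos h0]; exact le_top
  have hc'le : labelFrom d x ω w ≤ δ := by
    have hrep : List.replicate (m - 1) (negL b) = negL b :: List.replicate (m - 2) (negL b) := by
      have : m - 1 = (m - 2) + 1 := by omega
      rw [this, List.replicate_succ]
    have hunfold : labelFrom d x ω w
        = x ω b * (x (ω ++ [b]) (negL b) *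
          labelFrom d x (ω ++ [b] ++ [negL b]) (List.replicate (m - 2) (negL b))) := by
      rw [hw, hrep]; rfl
    rw [hunfold]
    have hA0 : 0 ≤ x ω b := (hx ω).1 b
    have hA1 : x ω b ≤ 1 := simplex_coord_le_one (hx ω) b
    have hB0 : 0 ≤ x (ω ++ [b]) (negL b) := (hx (ω ++ [b])).1 (negL b)
    have hC0 : 0 ≤ labelFrom d x (ω ++ [b] ++ [negL b]) (List.replicate (m - 2) (negL b)) :=
      labelFrom_nonneg hx _ _
    have hC1 : labelFrom d x (ω ++ [b] ++ [negL b]) (List.replicate (m - 2) (negL b)) ≤ 1 :=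
      labelFrom_le_one hx _ _
    have hBC : x (ω ++ [b]) (negL b) *
        labelFrom d x (ω ++ [b] ++ [negL b]) (List.replicate (m - 2) (negL b)) ≤ δ := by
      calc x (ω ++ [b]) (negL b) *
          labelFrom d x (ω ++ [b] ++ [negL b]) (List.replicate (m - 2) (negL b))
          ≤ δ * 1 := mul_le_mul hb hC1 hC0 hδ0.le
        _ = δ := mul_one δ
    calc x ω b * (x (ω ++ [b]) (negL b) *
        labelFrom d x (ω ++ [b] ++ [negL b]) (List.replicate (m - 2) (negL b)))
        ≤ 1 * δ := mul_le_mul hA1 hBC (mul_nonneg hB0 hC0) zero_le_one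
      _ = δ := one_mul δ
  have hc'0 : 0 ≤ labelFrom d x ω w := labelFrom_nonneg hx _ _
  have hsplit : label d x (ω ++ w) = label d x ω * labelFrom d x ω w := label_append x ω w
  have hlne : label d x ω ≠ 0 := by
    intro h; apply h0; rw [hsplit, h, zero_mul]
  have hcne : labelFrom d x ω w ≠ 0 := by
    intro h; apply h0; rw [hsplit, h, mul_zero]
  have hcpos : 0 < labelFrom d x ω w := lt_of_le_of_ne hc'0 (Ne.symm hcne)
  rw [ratio, if_neg h0, hsplit]
  have hdiv : label d x ω / (label d x ω * labelFrom d x ω w) = (labelFrom d x ω w)⁻¹ := by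
    field_simp
  rw [hdiv]
  apply ENNReal.ofReal_le_ofReal
  exact inv_anti₀ hcpos hc'le

lemma HmPhi_ge (x : Wd d → Pt d) (Φ : ℝ → ℝ) (m : ℕ) {ω : Wd d}
    (hcond : 1 ≤ ω.length ∧
      ((2 : ℝ) ^ (-(ω.length : ℝ))) ^ (-Φ ((2 : ℝ) ^ (-(ω.length : ℝ)))) < (2 : ℝ) ^ m)
    (v : ℝ≥0∞) (hv : ∀ w : Wd d, w.length = m → IsCentral d w → v ≤ ratio d x ω w) :
    v ≤ HmPhi d x Φ m := by
  refine le_sup_of_le_right ?_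
  have hinner : v ≤ ⨅ (w : Wd d) (_ : w.length = m ∧ IsCentral d w), ratio d x ω w :=
    le_iInf fun w => le_iInf fun hw => hv w hw.1 hw.2
  exact le_trans hinner (le_iSup_of_le ω (le_iSup_of_le hcond le_rfl))

lemma log2_div_ge {H : ℝ≥0∞} (K m : ℕ) (hm : 1 ≤ m)
    (h : ENNReal.ofReal ((2:ℝ) ^ (K * m)) ≤ H) :
    (K : ℝ≥0∞) ≤ log2 H / (m : ℝ≥0∞) := by
  by_cases htop : H = ⊤
  · rw [log2, if_pos htop]
    rw [ENNReal.top_div_of_ne_top (ENNReal.natCast_ne_top m)]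
    exact le_top
  · rw [log2, if_neg htop]
    have h2 : (2:ℝ) ^ (K * m) ≤ H.toReal := by
      have := ENNReal.toReal_mono htop h
      rwa [ENNReal.toReal_ofReal (by positivity)] at this
    have hlogb : ((K * m : ℕ) : ℝ) ≤ Real.logb 2 H.toReal := by
      calc ((K * m : ℕ) : ℝ) = Real.logb 2 ((2:ℝ) ^ (K * m)) := by
            rw [Real.logb_pow]
            rw [Real.logb_self_eq_one (by norm_num : (1:ℝ) < 2)]
            push_cast; ring
        _ ≤ Real.logb 2 H.toReal := by
            exact Real.logb_le_logb_of_le (by norm_num : (1:ℝ) < 2) (by positivity) h2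
    have : ((K * m : ℕ) : ℝ≥0∞) ≤ ENNReal.ofReal (Real.logb 2 H.toReal) := by
      rw [← ENNReal.ofReal_natCast (K * m)]
      exact ENNReal.ofReal_le_ofReal hlogb
    have hm0 : (m : ℝ≥0∞) ≠ 0 := by
      exact_mod_cast Nat.pos_of_ne_zero (by omega) |>.ne'
    calc (K : ℝ≥0∞) = (K : ℝ≥0∞) * m / m := by
          rw [mul_div_assoc, ENNReal.div_self hm0 (ENNReal.natCast_ne_top m), mul_one]
      _ ≤ ENNReal.ofReal (Real.logb 2 H.toReal) / m := by
          apply ENNReal.div_le_div_right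
          calc (K : ℝ≥0∞) * m = ((K * m : ℕ) : ℝ≥0∞) := by push_cast; ring
            _ ≤ _ := this


/-- The depth used at stage `m`. -/
def lm (d K c₂ m : ℕ) : ℕ := 2 ^ d * (K * m * kk d + c₂) + m

lemma lm_lt (d K c₂ : ℕ) (m : ℕ) (hm : 1 ≤ m) :
    lm d K c₂ m < (2 ^ d * K * kk d + 2 ^ d * c₂ + 2) * m := by
  have h1 : 2 ^ d * c₂ ≤ 2 ^ d * c₂ * m := Nat.le_mul_of_pos_right _ hm
  have h2 : lm d K c₂ m = 2 ^ d * K * kk d * m + 2 ^ d * c₂ + m := by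
    rw [lm]; ring
  have h3 : (2 ^ d * K * kk d + 2 ^ d * c₂ + 2) * m
      = 2 ^ d * K * kk d * m + 2 ^ d * c₂ * m + 2 * m := by ring
  omega

lemma qual (d : ℕ) (Φ : ℝ → ℝ)
    (hΦpos : ∀ t ∈ Set.Ioo (0:ℝ) 1, 0 < Φ t)
    (hΦ0 : Filter.limsup (fun t => ENNReal.ofReal (Φ t))
      (nhdsWithin 0 (Set.Ioo (0:ℝ) 1)) = 0)
    (K c₂ : ℕ) :
    ∃ M : ℕ, ∀ m, M ≤ m → 2 ≤ m ∧ 1 ≤ lm d K c₂ m ∧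
      ((2:ℝ) ^ (-((lm d K c₂ m : ℕ):ℝ))) ^ (-Φ ((2:ℝ) ^ (-((lm d K c₂ m : ℕ):ℝ))))
        < (2:ℝ) ^ m := by
  set j : ℕ := 2 ^ d * K * kk d + 2 ^ d * c₂ + 2 with hj
  have hjpos : 0 < j := by positivity
  have hev : ∀ᶠ t in nhdsWithin 0 (Set.Ioo (0:ℝ) 1),
      ENNReal.ofReal (Φ t) < ENNReal.ofReal (1/(j:ℝ)) :=
    Filter.eventually_lt_of_limsup_lt
      (by rw [hΦ0]; exact ENNReal.ofReal_pos.2 (by positivity))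
  have hev2 : ∃ η > 0, ∀ t ∈ Set.Ioo (0:ℝ) 1, |t| < η → Φ t < 1/(j:ℝ) := by
    rw [Filter.Eventually, Metric.mem_nhdsWithin_iff] at hev
    obtain ⟨η, hη, hsub⟩ := hev
    refine ⟨η, hη, fun t ht habs => ?_⟩
    have := hsub ⟨by simpa [Metric.mem_ball, Real.dist_eq] using habs, ht⟩
    exact (ENNReal.ofReal_lt_ofReal_iff (by positivity)).mp this
  obtain ⟨η, hη, hΦlt⟩ := hev2
  obtain ⟨M₁, hM₁⟩ := exists_pow_lt_of_lt_one hη (by norm_num : (1/2:ℝ) < 1)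
  refine ⟨max M₁ 2, fun m hm => ?_⟩
  have hm2 : 2 ≤ m := le_trans (le_max_right _ _) hm
  have hmM₁ : M₁ ≤ m := le_trans (le_max_left _ _) hm
  set ℓ : ℕ := lm d K c₂ m with hℓ
  have hmℓ : m ≤ ℓ := Nat.le_add_left m _
  have hℓ1 : 1 ≤ ℓ := le_trans (by omega) hmℓ
  refine ⟨hm2, hℓ1, ?_⟩
  have ht_eq : (2:ℝ) ^ (-((ℓ:ℕ):ℝ)) = (1/2:ℝ) ^ ℓ := by
    rw [Real.rpow_neg (by norm_num : (0:ℝ) ≤ 2), Real.rpow_natCast]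
    rw [one_div, inv_pow]
  have ht01 : (2:ℝ) ^ (-((ℓ:ℕ):ℝ)) ∈ Set.Ioo (0:ℝ) 1 := by
    rw [ht_eq]
    constructor
    · positivity
    · exact pow_lt_one₀ (by norm_num) (by norm_num) (by omega)
  have htη : |(2:ℝ) ^ (-((ℓ:ℕ):ℝ))| < η := by
    rw [ht_eq, abs_of_pos (by positivity)]
    calc (1/2:ℝ) ^ ℓ ≤ (1/2:ℝ) ^ M₁ :=
          pow_le_pow_of_le_one (by norm_num) (by norm_num) (le_trans hmM₁ hmℓ)
      _ < η := hM₁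
  have hΦt : Φ ((2:ℝ) ^ (-((ℓ:ℕ):ℝ))) < 1/(j:ℝ) := hΦlt _ ht01 htη
  have hΦtpos : 0 < Φ ((2:ℝ) ^ (-((ℓ:ℕ):ℝ))) := hΦpos _ ht01
  rw [← Real.rpow_natCast 2 m, ← Real.rpow_mul (by norm_num : (0:ℝ) ≤ 2)]
  rw [Real.rpow_lt_rpow_left_iff (by norm_num : (1:ℝ) < 2)]
  have hℓj : (ℓ:ℝ) < (j:ℝ) * m := by
    have h := lm_lt d K c₂ m (by omega)
    have h2 : ℓ < j * m := by rw [hℓ, hj]; exact h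
    exact_mod_cast h2
  calc -((ℓ:ℕ):ℝ) * -Φ ((2:ℝ) ^ (-((ℓ:ℕ):ℝ)))
      = (ℓ:ℝ) * Φ ((2:ℝ) ^ (-((ℓ:ℕ):ℝ))) := by ring
    _ < (ℓ:ℝ) * (1/(j:ℝ)) := by
        apply mul_lt_mul_of_pos_left hΦt
        exact_mod_cast hℓ1
    _ ≤ (j:ℝ) * m * (1/(j:ℝ)) := by
        apply mul_le_mul_of_nonneg_right hℓj.le
        positivity
    _ = m := by
        field_simp


lemma prob_bad_le (d : ℕ) (hd : 1 ≤ d) (P : Measure (Wd d → Pt d)) [IsProbabilityMeasure P]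
    (hP : ∀ F : Finset (Wd d),
      P.map (fun x (w : F) => x (w : Wd d)) = Measure.pi fun _ : F => sigmaMeas d)
    (K c₂ : ℕ)
    (hc₂ : (2:ℝ≥0∞)⁻¹ ^ c₂
      ≤ (mH d (simplexSet d))⁻¹ * ENNReal.ofReal ((1/(kk d : ℝ))^(kk d)))
    (m : ℕ) :
    P ((⋃ r : Fin (lm d K c₂ m) → Lam d,
        Bev d (lm d K c₂ m) ((2⁻¹:ℝ)^(K*m)) r)ᶜ) ≤ (2:ℝ≥0∞)⁻¹ ^ m := by
  set ℓ : ℕ := lm d K c₂ m with hℓ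
  set δ : ℝ := (2⁻¹:ℝ)^(K*m) with hδ
  have hδ0 : 0 < δ := by positivity
  have hδ1 : δ ≤ 1 := pow_le_one₀ (by norm_num) (by norm_num)
  have hk : (0:ℝ) < kk d := by exact_mod_cast kk_pos hd
  -- lower bound on each coordinate probability
  have hofreal : ENNReal.ofReal ((δ/(kk d : ℝ))^(kk d))
      = ENNReal.ofReal (δ^(kk d)) * ENNReal.ofReal ((1/(kk d : ℝ))^(kk d)) := by
    rw [← ENNReal.ofReal_mul (by positivity)]
    congr 1
    rw [div_pow, one_div, inv_pow, div_eq_mul_inv]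
  have hδpow : ENNReal.ofReal (δ^(kk d)) = (2:ℝ≥0∞)⁻¹ ^ (K * m * kk d) := by
    rw [hδ, ← pow_mul]
    rw [ENNReal.ofReal_pow (by norm_num)]
    congr 1
    rw [ENNReal.ofReal_inv_of_pos (by norm_num : (0:ℝ) < 2)]
    norm_num
  have hcoord : ∀ a : Lam d,
      (2:ℝ≥0∞)⁻¹ ^ (K * m * kk d + c₂) ≤ sigmaMeas d (Cset d a δ) := by
    intro a
    have h1 := sigmaMeas_coordLe_ge hd a hδ0 hδ1
    refine le_trans ?_ h1
    rw [hofreal]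
    calc (2:ℝ≥0∞)⁻¹ ^ (K * m * kk d + c₂)
        = (2:ℝ≥0∞)⁻¹ ^ (K * m * kk d) * (2:ℝ≥0∞)⁻¹ ^ c₂ := pow_add _ _ _
      _ ≤ ENNReal.ofReal (δ^(kk d)) *
          ((mH d (simplexSet d))⁻¹ * ENNReal.ofReal ((1/(kk d : ℝ))^(kk d))) := by
          rw [hδpow]
          exact mul_le_mul_right hc₂ _
      _ = (mH d (simplexSet d))⁻¹ *
          (ENNReal.ofReal (δ^(kk d)) * ENNReal.ofReal ((1/(kk d : ℝ))^(kk d))) := by ring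
  have hQQ : (2:ℝ≥0∞)⁻¹ ^ ((K * m * kk d + c₂) * 2 ^ d) ≤ QQ d δ := by
    rw [QQ, pow_mul]
    calc ((2:ℝ≥0∞)⁻¹ ^ (K * m * kk d + c₂)) ^ (2 ^ d)
        = ∏ _b : Lam d, (2:ℝ≥0∞)⁻¹ ^ (K * m * kk d + c₂) := by
          rw [Finset.prod_const, Finset.card_univ, card_lam]
      _ ≤ ∏ b : Lam d, sigmaMeas d (Cset d (negL b) δ) :=
          Finset.prod_le_prod' fun b _ => hcoord (negL b)
  have hcard : ((Fintype.card (Fin ℓ → Lam d) : ℕ) : ℝ≥0∞) = (2:ℝ≥0∞) ^ (d * ℓ) := by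
    rw [Fintype.card_fun, Fintype.card_fin, card_lam]
    push_cast
    rw [← pow_mul]
  have hNQ : (2:ℝ≥0∞) ^ m ≤ (Fintype.card (Fin ℓ → Lam d) : ℝ≥0∞) * QQ d δ := by
    calc (2:ℝ≥0∞) ^ m
        = (2:ℝ≥0∞) ^ (2 ^ d * (K * m * kk d + c₂) + m) *
            (2:ℝ≥0∞)⁻¹ ^ ((K * m * kk d + c₂) * 2 ^ d) := by
          rw [mul_comm (2 ^ d) (K * m * kk d + c₂), pow_add]
          rw [mul_right_comm]
          rw [← mul_pow, ENNReal.mul_inv_cancel (by norm_num) (by norm_num), one_pow, one_mul]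
      _ ≤ (2:ℝ≥0∞) ^ (d * ℓ) * QQ d δ := by
          refine mul_le_mul' (pow_le_pow_right₀ (by norm_num : (1:ℝ≥0∞) ≤ 2) ?_) hQQ
          have h1 : 2 ^ d * (K * m * kk d + c₂) + m = ℓ := rfl
          rw [h1]
          exact Nat.le_mul_of_pos_left ℓ (by omega)
      _ = (Fintype.card (Fin ℓ → Lam d) : ℝ≥0∞) * QQ d δ := by rw [hcard]
  have hbad := prob_bad d hd P hP ℓ δ
  refine hbad.trans ?_
  calc ((Fintype.card (Fin ℓ → Lam d) : ℝ≥0∞) * QQ d δ)⁻¹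
      ≤ ((2:ℝ≥0∞) ^ m)⁻¹ := ENNReal.inv_le_inv' hNQ
    _ = (2:ℝ≥0∞)⁻¹ ^ m := by rw [ENNReal.inv_pow]

end S16

/-- If `φ(x) = x^{−Φ(x)}` is nonincreasing and left-continuous on `(0,1)`
and `limsup_{x→0+} Φ(x) = 0`, then `ℙ(limsup_m (log₂ H_{m,Φ})/m < ∞) = 0`; that is, for
`ℙ`-a.e. `x`, `limsup_m (log₂ H_{m,Φ}(x))/m = ∞`. -/
theorem stmt16 (d : ℕ) (hd : 1 ≤ d) (P : Measure (Wd d → Pt d)) [IsProbabilityMeasure P]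
    (hP : ∀ F : Finset (Wd d),
      P.map (fun x (w : F) => x (w : Wd d)) = Measure.pi fun _ : F => sigmaMeas d)
    (Φ : ℝ → ℝ) (hΦpos : ∀ t ∈ Set.Ioo (0 : ℝ) 1, 0 < Φ t)
    (hmono : ∀ t₁ ∈ Set.Ioo (0 : ℝ) 1, ∀ t₂ ∈ Set.Ioo (0 : ℝ) 1, t₁ ≤ t₂ →
      t₂ ^ (-Φ t₂) ≤ t₁ ^ (-Φ t₁))
    (hlc : ∀ t ∈ Set.Ioo (0 : ℝ) 1, Filter.Tendsto (fun u : ℝ => u ^ (-Φ u))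
      (nhdsWithin t (Set.Ioo 0 t)) (nhds (t ^ (-Φ t))))
    (hΦ0 : Filter.limsup (fun t => ENNReal.ofReal (Φ t)) (nhdsWithin 0 (Set.Ioo (0:ℝ) 1)) = 0) :
    P {x : Wd d → Pt d |
        Filter.limsup (fun m : ℕ => log2 (HmPhi d x Φ m) / (m : ℝ≥0∞)) Filter.atTop < ⊤} = 0 ∧
    ∀ᵐ x ∂P,
      Filter.limsup (fun m : ℕ => log2 (HmPhi d x Φ m) / (m : ℝ≥0∞)) Filter.atTop = ⊤ := by
  classical
  haveI hσ : IsProbabilityMeasure (sigmaMeas d) := S16.sigmaMeas_prob hd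
  -- choose the constant c₂
  have ha0 : ((S16.mH d (simplexSet d))⁻¹
      * ENNReal.ofReal ((1/(S16.kk d : ℝ))^(S16.kk d))) ≠ 0 := by
    have hk : (0:ℝ) < S16.kk d := by exact_mod_cast S16.kk_pos hd
    apply mul_ne_zero
    · exact ENNReal.inv_ne_zero.2 (S16.mH_simplex_lt_top hd).ne
    · exact (ENNReal.ofReal_pos.2 (by positivity)).ne'
  obtain ⟨c₂, hc₂⟩ := ENNReal.exists_inv_two_pow_lt ha0
  -- a.e. every node lies in the simplex
  have hsimp_ae : ∀ᵐ x ∂P, ∀ w : Wd d, x w ∈ simplexSet d := by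
    rw [MeasureTheory.ae_all_iff]
    intro w
    rw [MeasureTheory.ae_iff]
    have hT : MeasurableSet {y : (u : ({w} : Finset (Wd d))) → Pt d |
        y ⟨w, Finset.mem_singleton_self w⟩ ∈ (simplexSet d)ᶜ} :=
      measurable_pi_apply _ (S16.measurableSet_simplex.compl)
    have hpre : {x : Wd d → Pt d | ¬ x w ∈ simplexSet d}
        = (fun x (u : ({w} : Finset (Wd d))) => x (u : Wd d)) ⁻¹'
          {y | y ⟨w, Finset.mem_singleton_self w⟩ ∈ (simplexSet d)ᶜ} := rfl
    rw [hpre, ← Measure.map_apply (S16.measurable_proj d {w}) hT, hP {w}]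
    have hTpi : {y : (u : ({w} : Finset (Wd d))) → Pt d |
        y ⟨w, Finset.mem_singleton_self w⟩ ∈ (simplexSet d)ᶜ}
        = Set.univ.pi (fun _ => (simplexSet d)ᶜ) := by
      ext y
      constructor
      · intro hy u _
        have hu : u = ⟨w, Finset.mem_singleton_self w⟩ :=
          Subtype.ext (Finset.mem_singleton.mp u.2)
        rw [hu]; exact hy
      · intro hy; exact hy _ (Set.mem_univ _)
    rw [hTpi, Measure.pi_pi]
    have hcompl : sigmaMeas d (simplexSet d)ᶜ = 0 := by
      rw [measure_compl S16.measurableSet_simplex (measure_ne_top _ _),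
        S16.sigmaMeas_simplex hd, measure_univ, tsub_self]
    exact Finset.prod_eq_zero (Finset.mem_univ ⟨w, Finset.mem_singleton_self w⟩) hcompl
  -- for each K, a.e. eventually there is a good root
  have hgood : ∀ K : ℕ, ∀ᵐ x ∂P, ∀ᶠ m in Filter.atTop,
      ∃ r : Fin (S16.lm d K c₂ m) → Lam d,
        x ∈ S16.Bev d (S16.lm d K c₂ m) ((2⁻¹:ℝ)^(K*m)) r := by
    intro K
    have hb : ∀ m, P ((⋃ r : Fin (S16.lm d K c₂ m) → Lam d,
        S16.Bev d (S16.lm d K c₂ m) ((2⁻¹:ℝ)^(K*m)) r)ᶜ) ≤ (2:ℝ≥0∞)⁻¹ ^ m :=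
      fun m => S16.prob_bad_le d hd P hP K c₂ hc₂.le m
    have hsum : (∑' m, P ((⋃ r : Fin (S16.lm d K c₂ m) → Lam d,
        S16.Bev d (S16.lm d K c₂ m) ((2⁻¹:ℝ)^(K*m)) r)ᶜ)) ≠ ⊤ := by
      refine ne_top_of_le_ne_top ?_ (ENNReal.tsum_le_tsum hb)
      rw [ENNReal.tsum_geometric]
      simp [ENNReal.one_sub_inv_two]
    have hae := MeasureTheory.ae_eventually_notMem hsum
    filter_upwards [hae] with x hx
    filter_upwards [hx] with m hm
    have hxU : x ∈ ⋃ r : Fin (S16.lm d K c₂ m) → Lam d,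
        S16.Bev d (S16.lm d K c₂ m) ((2⁻¹:ℝ)^(K*m)) r := by
      by_contra hcon
      exact hm hcon
    exact Set.mem_iUnion.mp hxU
  -- combine
  have hfinal : ∀ᵐ x ∂P, Filter.limsup
      (fun m : ℕ => log2 (HmPhi d x Φ m) / (m : ℝ≥0∞)) Filter.atTop = ⊤ := by
    filter_upwards [hsimp_ae, MeasureTheory.ae_all_iff.2 hgood] with x hx hgoodx
    apply top_unique
    rw [← ENNReal.iSup_natCast]
    refine iSup_le fun K => ?_
    obtain ⟨M, hM⟩ := S16.qual d Φ hΦpos hΦ0 K c₂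
    refine Filter.le_limsup_of_frequently_le (Filter.Eventually.frequently ?_)
    filter_upwards [hgoodx K, Filter.eventually_ge_atTop M] with m hgm hmM
    obtain ⟨hm2, hl1, hq⟩ := hM m hmM
    obtain ⟨r, hr⟩ := hgm
    have hδ0 : (0:ℝ) < (2⁻¹:ℝ)^(K*m) := by positivity
    have hHm : ENNReal.ofReal ((2:ℝ)^(K*m)) ≤ HmPhi d x Φ m := by
      have hδinv : (2:ℝ)^(K*m) = (((2⁻¹:ℝ))^(K*m))⁻¹ := by
        rw [inv_pow, inv_inv]
      have hcond : 1 ≤ (List.ofFn r).length ∧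
          ((2 : ℝ) ^ (-((List.ofFn r).length : ℝ)))
            ^ (-Φ ((2 : ℝ) ^ (-((List.ofFn r).length : ℝ)))) < (2 : ℝ) ^ m := by
        rw [List.length_ofFn]
        exact ⟨hl1, hq⟩
      rw [hδinv]
      refine S16.HmPhi_ge x Φ m hcond _ (fun w hwlen hwc => ?_)
      obtain ⟨b, hb⟩ := S16.central_eq (by omega : 1 ≤ m) hwlen hwc
      rw [hb]
      refine S16.ratio_ge hx hm2 hδ0 ?_
      exact hr b
    exact S16.log2_div_ge K m (by omega) hHm
  refine ⟨?_, hfinal⟩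
  have h0 := (MeasureTheory.ae_iff).mp hfinal
  refine measure_mono_null (fun x hx => ?_) h0
  exact LT.lt.ne hx
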